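/- arXiv:2207.06918 — 3 statements merged into one kernel-verified Lean document; each statement's English description precedes it below -/
import Mathlib

section
/- For α > 2 and constants a > 0, the integral over ℝ² of 1 − (p/(1 + a·‖x‖^{−α}) + 1 − p) dx equals p · π a^{2/α} Γ(1 + 2/α) Γ(1 − 2/α). -/
open MeasureTheory Real

section Aux

open Set

private lemma beta_Ioo_aux (u : ℝ) (h0 : 0 < u) (h1 : u < 1) :
    ∫ t in Ioo (0:ℝ) 1, t ^ (u - 1) * (1 - t) ^ (-u) =
      Real.Gamma u * Real.Gamma (1 - u) := by
  have hc : Complex.Gamma u * Complex.Gamma (1 - u) = Complex.betaIntegral u (1 - u) := by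
    have := Complex.Gamma_mul_Gamma_eq_betaIntegral (s := (u:ℂ)) (t := 1 - (u:ℂ))
      (by simpa using h0) (by simp [Complex.sub_re]; linarith)
    simpa [Complex.Gamma_one] using this
  have hre : Complex.betaIntegral u (1 - u)
      = ((∫ t in Ioo (0:ℝ) 1, t ^ (u - 1) * (1 - t) ^ (-u) : ℝ) : ℂ) := by
    rw [Complex.betaIntegral, intervalIntegral.integral_of_le zero_le_one,
      integral_Ioc_eq_integral_Ioo]
    calc ∫ t in Ioo (0:ℝ) 1, (t:ℂ) ^ ((u:ℂ) - 1) * (1 - (t:ℂ)) ^ (1 - (u:ℂ) - 1)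
        = ∫ t in Ioo (0:ℝ) 1, ((t ^ (u - 1) * (1 - t) ^ (-u) : ℝ) : ℂ) := by
          refine setIntegral_congr_fun measurableSet_Ioo fun x hx => ?_
          obtain ⟨hx0, hx1⟩ := hx
          push_cast
          rw [Complex.ofReal_cpow hx0.le, Complex.ofReal_cpow (by linarith)]
          push_cast
          ring_nf
      _ = _ := integral_ofReal
  have : ((∫ t in Ioo (0:ℝ) 1, t ^ (u - 1) * (1 - t) ^ (-u) : ℝ) : ℂ)
      = ((Real.Gamma u * Real.Gamma (1 - u) : ℝ) : ℂ) := by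
    rw [← hre, ← hc]
    push_cast [Complex.Gamma_ofReal, ← Complex.ofReal_one, ← Complex.ofReal_sub,
      Complex.Gamma_ofReal]
    norm_num
  exact_mod_cast this

private lemma beta_Ioi_aux (u : ℝ) (h0 : 0 < u) (h1 : u < 1) :
    ∫ t in Ioi (0:ℝ), t ^ (u - 1) / (1 + t) =
      Real.Gamma u * Real.Gamma (1 - u) := by
  rw [← beta_Ioo_aux u h0 h1]
  have himg : (fun t : ℝ => t / (1 + t)) '' Ioi 0 = Ioo 0 1 := by
    ext x
    constructor
    · rintro ⟨t, ht, rfl⟩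
      have ht' : (0:ℝ) < 1 + t := by linarith [mem_Ioi.mp ht]
      exact ⟨div_pos (mem_Ioi.mp ht) ht', (div_lt_one ht').mpr (by linarith)⟩
    · rintro ⟨hx0, hx1⟩
      refine ⟨x / (1 - x), div_pos hx0 (by linarith), ?_⟩
      have hx' : (1:ℝ) - x ≠ 0 := by linarith
      have h : (1:ℝ) + x / (1 - x) = 1 / (1 - x) := by field_simp; ring
      show x / (1 - x) / (1 + x / (1 - x)) = x
      rw [h]
      field_simp
  have hderiv : ∀ t ∈ Ioi (0:ℝ), HasDerivWithinAt (fun t : ℝ => t / (1 + t))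
      (((1 + t) ^ 2)⁻¹) (Ioi 0) t := by
    intro t ht
    have ht' : (1:ℝ) + t ≠ 0 := by have := mem_Ioi.mp ht; positivity
    have := (hasDerivAt_id t).div ((hasDerivAt_const t (1:ℝ)).add (hasDerivAt_id t)) ht'
    refine this.hasDerivWithinAt.congr_deriv ?_
    simp only [Pi.add_apply, id]
    ring
  have hinj : InjOn (fun t : ℝ => t / (1 + t)) (Ioi 0) := by
    have : StrictMonoOn (fun t : ℝ => t / (1 + t)) (Ioi 0) := by
      intro x hx y hy hxy
      have hx' : (0:ℝ) < 1 + x := by linarith [mem_Ioi.mp hx]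
      have hy' : (0:ℝ) < 1 + y := by linarith [mem_Ioi.mp hy]
      rw [div_lt_div_iff₀ hx' hy']
      nlinarith
    exact this.injOn
  have key := integral_image_eq_integral_abs_deriv_smul measurableSet_Ioi hderiv hinj
    (fun x => x ^ (u - 1) * (1 - x) ^ (-u))
  rw [himg] at key
  rw [key]
  refine setIntegral_congr_fun measurableSet_Ioi fun t ht => ?_
  have ht0 : (0:ℝ) < t := mem_Ioi.mp ht
  have hs : (0:ℝ) < 1 + t := by linarith
  have h1s : (1:ℝ) - t / (1 + t) = (1 + t)⁻¹ := by field_simp; ring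
  simp only [smul_eq_mul, h1s]
  rw [abs_of_nonneg (by positivity), div_rpow ht0.le hs.le,
    Real.inv_rpow hs.le, Real.rpow_neg hs.le, inv_inv]
  have h2 : (1+t) ^ u = (1+t) ^ (u-1) * (1+t) := by
    have h3 := Real.rpow_add hs (u-1) 1
    rw [Real.rpow_one] at h3
    rw [show u - 1 + 1 = u by ring] at h3
    exact h3
  have hne : (1+t) ^ (u-1) ≠ 0 := (rpow_pos_of_pos hs _).ne'
  rw [h2]
  field_simp

private lemma one_dim_aux (α a : ℝ) (hα : 2 < α) (ha : 0 < a) :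
    ∫ y in Ioi (0:ℝ), y / (y ^ α + a) =
      a ^ (2/α - 1) * (Real.Gamma (1 + 2/α) * Real.Gamma (1 - 2/α) / 2) := by
  have hα0 : (0:ℝ) < α := by linarith
  have hαne : α ≠ 0 := hα0.ne'
  have hu0 : (0:ℝ) < 2/α := by positivity
  have hu1 : 2/α < 1 := (div_lt_one hα0).mpr hα
  set b : ℝ := a ^ (α⁻¹) with hbdef
  have hb : 0 < b := rpow_pos_of_pos ha _
  have hbα : b ^ α = a := by
    rw [hbdef, ← Real.rpow_mul ha.le, inv_mul_cancel₀ hαne, Real.rpow_one]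
  -- step 1: scale y = b * x
  have step1 : ∫ x in Ioi (0:ℝ), (b * x) / ((b * x) ^ α + a)
      = b⁻¹ • ∫ y in Ioi (0:ℝ), y / (y ^ α + a) := by
    have := integral_comp_mul_left_Ioi (fun y => y / (y ^ α + a)) 0 hb
    rw [mul_zero] at this
    exact this
  -- I₂ = ∫ x/(x^α + 1)
  have I2 : ∫ x in Ioi (0:ℝ), x / (x ^ α + 1) =
      Real.Gamma (1 + 2/α) * Real.Gamma (1 - 2/α) / 2 := by
    have hcomp : ∫ x in Ioi (0:ℝ), (α * x ^ (α - 1)) •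
          (α⁻¹ * ((x ^ α) ^ (2/α - 1) / (1 + x ^ α)))
        = ∫ t in Ioi (0:ℝ), α⁻¹ * (t ^ (2/α - 1) / (1 + t)) :=
      integral_comp_rpow_Ioi_of_pos
        (g := fun t : ℝ => α⁻¹ * (t ^ (2/α - 1) / (1 + t))) hα0
    have hL : ∫ x in Ioi (0:ℝ), (α * x ^ (α - 1)) •
        (α⁻¹ * ((x ^ α) ^ (2/α - 1) / (1 + x ^ α))) = ∫ x in Ioi (0:ℝ), x / (x ^ α + 1) := by
      refine setIntegral_congr_fun measurableSet_Ioi fun x hx => ?_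
      have hx0 : (0:ℝ) < x := mem_Ioi.mp hx
      have h1 : (x ^ α) ^ (2/α - 1) = x ^ (2 - α) := by
        rw [← Real.rpow_mul hx0.le]
        congr 1
        field_simp
      have h2 : x ^ (α - 1) * x ^ (2 - α) = x := by
        rw [← Real.rpow_add hx0, show α - 1 + (2 - α) = 1 by ring, Real.rpow_one]
      simp only [smul_eq_mul, h1]
      rw [add_comm (x ^ α) 1]
      have h4 : α * x ^ (α-1) * (α⁻¹ * (x ^ (2-α) / (1 + x ^ α)))
          = (α * α⁻¹) * ((x ^ (α-1) * x ^ (2-α)) / (1 + x ^ α)) := by ring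
      rw [h4, h2, mul_inv_cancel₀ hαne, one_mul]
    have hR : ∫ t in Ioi (0:ℝ), α⁻¹ * (t ^ (2/α - 1) / (1 + t)) =
        α⁻¹ * (Real.Gamma (2/α) * Real.Gamma (1 - 2/α)) := by
      rw [integral_const_mul, beta_Ioi_aux (2/α) hu0 hu1]
    rw [hL, hR] at hcomp
    rw [hcomp]
    have hg : Real.Gamma (1 + 2/α) = (2/α) * Real.Gamma (2/α) := by
      rw [add_comm, Real.Gamma_add_one hu0.ne']
    rw [hg]
    field_simp
  -- combine
  have hint : ∫ x in Ioi (0:ℝ), (b * x) / ((b * x) ^ α + a)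
      = (b / a) * ∫ x in Ioi (0:ℝ), x / (x ^ α + 1) := by
    rw [← integral_const_mul]
    refine setIntegral_congr_fun measurableSet_Ioi fun x hx => ?_
    have hx0 : (0:ℝ) < x := mem_Ioi.mp hx
    rw [Real.mul_rpow hb.le hx0.le, hbα]
    have hd : a * x ^ α + a = a * (x ^ α + 1) := by ring
    rw [hd]
    have hxα : (0:ℝ) < x ^ α + 1 := by positivity
    field_simp
  rw [hint, smul_eq_mul] at step1
  have hmain : ∫ y in Ioi (0:ℝ), y / (y ^ α + a)
      = b * ((b / a) * (∫ x in Ioi (0:ℝ), x / (x ^ α + 1))) := by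
    rw [step1, ← mul_assoc, mul_inv_cancel₀ hb.ne', one_mul]
  rw [hmain, I2]
  have hbb : b * (b / a) = a ^ (2/α - 1) := by
    rw [hbdef, div_eq_mul_inv, ← mul_assoc, ← Real.rpow_add ha,
      show (a:ℝ)⁻¹ = a ^ (-1:ℝ) by rw [Real.rpow_neg_one], ← Real.rpow_add ha]
    congr 1
    field_simp
    ring
  rw [← mul_assoc, hbb]

/-- For `α > 2`, `a > 0` and `p ∈ (0,1]`, the planar integral of
`1 - (p/(1 + a‖x‖^{-α}) + 1 - p)` equals `p π a^{2/α} Γ(1+2/α) Γ(1-2/α)`. -/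
theorem stmt_7 (α a p : ℝ) (hα : 2 < α) (ha : 0 < a) (hp : p ∈ Set.Ioc (0 : ℝ) 1) :
    ∫ x : EuclideanSpace ℝ (Fin 2),
        (1 - (p / (1 + a * ‖x‖ ^ (-α)) + 1 - p)) =
      p * π * a ^ (2 / α) * Real.Gamma (1 + 2 / α) * Real.Gamma (1 - 2 / α) := by
  have h0 : ∀ᵐ x : EuclideanSpace ℝ (Fin 2) ∂volume, x ≠ 0 := by
    refine ae_iff.mpr ?_
    simpa using measure_singleton (0 : EuclideanSpace ℝ (Fin 2))
  have hae : (fun x : EuclideanSpace ℝ (Fin 2) =>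
      (1 - (p / (1 + a * ‖x‖ ^ (-α)) + 1 - p)))
      =ᵐ[volume] fun x => p * (a / (‖x‖ ^ α + a)) := by
    filter_upwards [h0] with x hx
    have hr : 0 < ‖x‖ := norm_pos_iff.mpr hx
    have hrα : 0 < ‖x‖ ^ α := rpow_pos_of_pos hr α
    rw [Real.rpow_neg hr.le]
    have h1 : (0:ℝ) < ‖x‖ ^ α + a := by positivity
    have h2 : 1 + a * (‖x‖ ^ α)⁻¹ = (‖x‖ ^ α + a) / ‖x‖ ^ α := by field_simp
    rw [h2]
    field_simp
    ring
  rw [integral_congr_ae hae]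
  rw [MeasureTheory.integral_fun_norm_addHaar (volume : Measure (EuclideanSpace ℝ (Fin 2)))
    (fun r => p * (a / (r ^ α + a)))]
  have hdim : Module.finrank ℝ (EuclideanSpace ℝ (Fin 2)) = 2 := finrank_euclideanSpace_fin
  rw [hdim]
  have hb : volume (Metric.ball (0 : EuclideanSpace ℝ (Fin 2)) 1) = ENNReal.ofReal π := by
    rw [EuclideanSpace.volume_ball]
    norm_num [Real.Gamma_two, Real.sq_sqrt Real.pi_nonneg]
  rw [measureReal_def, hb, ENNReal.toReal_ofReal Real.pi_nonneg]
  have hpull : ∫ y in Set.Ioi (0:ℝ), y ^ (2 - 1 : ℕ) • (p * (a / (y ^ α + a)))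
      = (p * a) * ∫ y in Set.Ioi (0:ℝ), y / (y ^ α + a) := by
    rw [← integral_const_mul]
    refine setIntegral_congr_fun measurableSet_Ioi fun y hy => ?_
    simp only [pow_one, smul_eq_mul]
    ring
  rw [hpull, one_dim_aux α a hα ha]
  have haa : a * a ^ (2/α - 1) = a ^ (2/α) := by
    have h := Real.rpow_add ha 1 (2/α - 1)
    rw [Real.rpow_one, show (1:ℝ) + (2/α - 1) = 2/α by ring] at h
    exact h.symm
  simp only [smul_eq_mul, nsmul_eq_mul]
  push_cast
  calc (2:ℝ) * (π * (p * a * (a ^ (2/α - 1) * (Real.Gamma (1 + 2/α) * Real.Gamma (1 - 2/α) / 2))))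
      = p * π * (a * a ^ (2/α - 1)) * Real.Gamma (1 + 2/α) * Real.Gamma (1 - 2/α) := by ring
    _ = _ := by rw [haa]

end Aux
end

section
/- Given λ, T_s > 0 and ε ∈ (0,1), for each D > 0 there exists a unique N > 0 solving λ(e^{θ}−1)/θ = 1/N where θ = ln(T_s ln(1/ε)/(λD) + 1), and N is strictly increasing in D. -/
/-- Key inequality: for `0 < a < b`, `a * log(1+b) < b * log(1+a)`,
i.e. `log(1+x)/x` is strictly decreasing. -/
lemma key_log_ineq (a b : ℝ) (ha : 0 < a) (hab : a < b) :
    a * Real.log (1 + b) < b * Real.log (1 + a) := by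
  have hb : 0 < b := ha.trans hab
  have hcon : (1 - a / b) • Real.log 1 + (a / b) • Real.log (1 + b)
      < Real.log ((1 - a / b) • (1:ℝ) + (a / b) • (1 + b)) :=
    strictConcaveOn_log_Ioi.2 (by simp) (by simp only [Set.mem_Ioi]; linarith)
      (by intro h; exact absurd h (by intro h'; linarith [h'] : ¬((1:ℝ) = 1 + b)))
      (by have : a / b < 1 := (div_lt_one hb).2 hab; linarith)
      (by positivity) (by ring)
  have h1 : (1 - a / b) • (1:ℝ) + (a / b) • (1 + b) = 1 + a := by
    simp only [smul_eq_mul]; rw [mul_one, mul_add, mul_one, div_mul_cancel₀ a hb.ne']; ring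
  rw [h1] at hcon
  simp only [smul_eq_mul, Real.log_one, mul_zero, zero_add] at hcon
  calc a * Real.log (1 + b) = b * (a / b * Real.log (1 + b)) := by field_simp
    _ < b * Real.log (1 + a) := mul_lt_mul_of_pos_left hcon hb

/-- For each delay bound `D > 0` there is a unique `N > 0` solving the
effective-bandwidth equation `λ (e^θ - 1)/θ = 1/N` with
`θ = ln(T_s ln(1/ε)/(λ D) + 1)`, and this `N` is strictly increasing in `D`. -/
theorem stmt_13 (l Ts ε : ℝ) (hl : 0 < l) (hTs : 0 < Ts) (hε : ε ∈ Set.Ioo (0 : ℝ) 1) :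
    (∀ D : ℝ, 0 < D → ∃! N : ℝ, 0 < N ∧
      (let θ := Real.log (Ts * Real.log (1 / ε) / (l * D) + 1)
       l * (Real.exp θ - 1) / θ = 1 / N)) ∧
    (∀ D₁ D₂ N₁ N₂ : ℝ, 0 < D₁ → D₁ < D₂ →
      (0 < N₁ ∧ (let θ := Real.log (Ts * Real.log (1 / ε) / (l * D₁) + 1)
        l * (Real.exp θ - 1) / θ = 1 / N₁)) →
      (0 < N₂ ∧ (let θ := Real.log (Ts * Real.log (1 / ε) / (l * D₂) + 1)
        l * (Real.exp θ - 1) / θ = 1 / N₂)) →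
      N₁ < N₂) := by
  obtain ⟨hε0, hε1⟩ := hε
  have hc : 0 < Ts * Real.log (1 / ε) :=
    mul_pos hTs (Real.log_pos (one_lt_one_div hε0 hε1))
  -- basic facts for a given D > 0
  have hx : ∀ D : ℝ, 0 < D → 0 < Ts * Real.log (1 / ε) / (l * D) := by
    intro D hD; positivity
  have hθpos : ∀ D : ℝ, 0 < D →
      0 < Real.log (Ts * Real.log (1 / ε) / (l * D) + 1) := by
    intro D hD
    exact Real.log_pos (by linarith [hx D hD])
  have hexp : ∀ D : ℝ, 0 < D →
      Real.exp (Real.log (Ts * Real.log (1 / ε) / (l * D) + 1)) - 1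
        = Ts * Real.log (1 / ε) / (l * D) := by
    intro D hD
    rw [Real.exp_log (by linarith [hx D hD])]; ring
  constructor
  · intro D hD
    set x := Ts * Real.log (1 / ε) / (l * D) with hxdef
    set θ := Real.log (x + 1) with hθdef
    have hxp := hx D hD
    have hθp := hθpos D hD
    have hE := hexp D hD
    refine ⟨θ / (l * x), ⟨by positivity, ?_⟩, ?_⟩
    · simp only [show Real.exp θ - 1 = x from hE]
      rw [one_div_div]
    · rintro N ⟨hN, hNeq⟩
      simp only [show Real.exp θ - 1 = x from hE] at hNeq
      have hlx : l * x / θ = 1 / N := hNeq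
      have : N = θ / (l * x) := by
        have := congrArg (fun t => 1 / t) hlx
        simp only [one_div_div, one_div_one_div, div_one] at this
        exact this.symm
      exact this
  · intro D₁ D₂ N₁ N₂ hD₁ hlt h1 h2
    obtain ⟨hN₁, heq₁⟩ := h1
    obtain ⟨hN₂, heq₂⟩ := h2
    have hD₂ : 0 < D₂ := hD₁.trans hlt
    set x₁ := Ts * Real.log (1 / ε) / (l * D₁) with hx1
    set x₂ := Ts * Real.log (1 / ε) / (l * D₂) with hx2
    have hx₁p := hx D₁ hD₁
    have hx₂p := hx D₂ hD₂
    have hθ₁ := hθpos D₁ hD₁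
    have hθ₂ := hθpos D₂ hD₂
    simp only [show Real.exp (Real.log (x₁ + 1)) - 1 = x₁ from hexp D₁ hD₁] at heq₁
    simp only [show Real.exp (Real.log (x₂ + 1)) - 1 = x₂ from hexp D₂ hD₂] at heq₂
    -- x₂ < x₁
    have hxlt : x₂ < x₁ := by
      rw [hx1, hx2]
      apply div_lt_div_of_pos_left hc (by positivity)
      exact (mul_lt_mul_iff_right₀ hl).2 hlt
    -- key inequality: x₂ * log(1+x₁) < x₁ * log(1+x₂)
    have hkey := key_log_ineq x₂ x₁ hx₂p hxlt
    rw [show (1:ℝ) + x₁ = x₁ + 1 by ring, show (1:ℝ) + x₂ = x₂ + 1 by ring] at hkey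
    -- 1/N₂ < 1/N₁
    have hdiv : l * x₂ / Real.log (x₂ + 1) < l * x₁ / Real.log (x₁ + 1) := by
      rw [div_lt_div_iff₀ hθ₂ hθ₁]
      nlinarith [hkey]
    rw [heq₁, heq₂] at hdiv
    exact lt_of_one_div_lt_one_div hN₂ hdiv
end

section
/- For fixed positive constants T, W, a, the map γ ↦ √(TW/V(γ)) · (ln(1+γ) − a ln 2/(TW)), where V(γ) = 1 − (1+γ)^{−2}, is strictly increasing on (0, ∞). -/
/-- The argument of the Q-function in the decoding error probability,
`γ ↦ √(TW/V(γ)) (ln(1+γ) - a ln 2/(TW))` with `V(γ) = 1 - (1+γ)^{-2}`,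
is strictly increasing on `(0,∞)`. -/
theorem stmt_15 (T W a : ℝ) (hT : 0 < T) (hW : 0 < W) (ha : 0 < a) :
    StrictMonoOn (fun γ : ℝ =>
        Real.sqrt (T * W / (1 - (1 + γ) ^ (-2 : ℤ))) *
          (Real.log (1 + γ) - a * Real.log 2 / (T * W)))
      (Set.Ioi 0) := by
  have hTW : 0 < T * W := mul_pos hT hW
  set c := a * Real.log 2 / (T * W) with hc
  have hcpos : 0 < c := div_pos (mul_pos ha (Real.log_pos one_lt_two)) hTW
  set g : ℝ → ℝ := fun γ =>
    Real.sqrt (T * W) * ((1 + γ) * (Real.log (1 + γ) - c) / Real.sqrt ((1 + γ) ^ 2 - 1))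
    with hgdef
  -- derivative of g at each point of Ioi 0
  have hderiv : ∀ γ ∈ Set.Ioi (0 : ℝ), HasDerivAt g
      (Real.sqrt (T * W) *
        (((1 * (Real.log (1 + γ) - c) + (1 + γ) * (1 / (1 + γ))) * Real.sqrt ((1 + γ) ^ 2 - 1)
          - (1 + γ) * (Real.log (1 + γ) - c) *
            (2 * (1 + γ) / (2 * Real.sqrt ((1 + γ) ^ 2 - 1)))) /
          (Real.sqrt ((1 + γ) ^ 2 - 1)) ^ 2)) γ := by
    intro γ hγ
    have hγ0 : (0 : ℝ) < γ := hγ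
    have hx : (0 : ℝ) < 1 + γ := by linarith
    have hx1 : (1 : ℝ) < 1 + γ := by linarith
    have hs : (0 : ℝ) < (1 + γ) ^ 2 - 1 := by nlinarith
    have h0 : HasDerivAt (fun γ : ℝ => 1 + γ) 1 γ := (hasDerivAt_id γ).const_add 1
    have hlog : HasDerivAt (fun γ : ℝ => Real.log (1 + γ)) (1 / (1 + γ)) γ :=
      h0.log (ne_of_gt hx)
    have hv : HasDerivAt (fun γ : ℝ => Real.log (1 + γ) - c) (1 / (1 + γ)) γ :=
      hlog.sub_const c
    have hnum : HasDerivAt (fun γ : ℝ => (1 + γ) * (Real.log (1 + γ) - c))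
        (1 * (Real.log (1 + γ) - c) + (1 + γ) * (1 / (1 + γ))) γ := h0.mul hv
    have hinner : HasDerivAt (fun γ : ℝ => (1 + γ) ^ 2 - 1) (2 * (1 + γ)) γ := by
      have := (h0.pow 2).sub_const 1
      simpa using this
    have hden : HasDerivAt (fun γ : ℝ => Real.sqrt ((1 + γ) ^ 2 - 1))
        (2 * (1 + γ) / (2 * Real.sqrt ((1 + γ) ^ 2 - 1))) γ := hinner.sqrt (ne_of_gt hs)
    have hsne : Real.sqrt ((1 + γ) ^ 2 - 1) ≠ 0 := by positivity
    exact (hnum.div hden hsne).const_mul _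
  -- the derivative is positive on Ioi 0
  have hpos : ∀ γ ∈ Set.Ioi (0 : ℝ),
      0 < Real.sqrt (T * W) *
        (((1 * (Real.log (1 + γ) - c) + (1 + γ) * (1 / (1 + γ))) * Real.sqrt ((1 + γ) ^ 2 - 1)
          - (1 + γ) * (Real.log (1 + γ) - c) *
            (2 * (1 + γ) / (2 * Real.sqrt ((1 + γ) ^ 2 - 1)))) /
          (Real.sqrt ((1 + γ) ^ 2 - 1)) ^ 2) := by
    intro γ hγ
    have hγ0 : (0 : ℝ) < γ := hγ
    have hx : (0 : ℝ) < 1 + γ := by linarith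
    have hx1 : (1 : ℝ) < 1 + γ := by linarith
    have hs : (0 : ℝ) < (1 + γ) ^ 2 - 1 := by nlinarith
    have ht : (0 : ℝ) < Real.sqrt ((1 + γ) ^ 2 - 1) := Real.sqrt_pos.mpr hs
    have ht2 : (Real.sqrt ((1 + γ) ^ 2 - 1)) ^ 2 = (1 + γ) ^ 2 - 1 :=
      Real.sq_sqrt hs.le
    have hlog : Real.log (1 + γ) < (1 + γ) - 1 :=
      Real.log_lt_sub_one_of_pos hx (by linarith)
    have hkey : 0 < ((1 + γ) ^ 2 - 1) - (Real.log (1 + γ) - c) := by nlinarith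
    have hsqTW : 0 < Real.sqrt (T * W) := Real.sqrt_pos.mpr hTW
    have hxne : (1 + γ) ≠ 0 := ne_of_gt hx
    have hNum : 0 <
        (1 * (Real.log (1 + γ) - c) + (1 + γ) * (1 / (1 + γ))) * Real.sqrt ((1 + γ) ^ 2 - 1)
          - (1 + γ) * (Real.log (1 + γ) - c) *
            (2 * (1 + γ) / (2 * Real.sqrt ((1 + γ) ^ 2 - 1))) := by
      have heq2 :
          (1 * (Real.log (1 + γ) - c) + (1 + γ) * (1 / (1 + γ))) * Real.sqrt ((1 + γ) ^ 2 - 1)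
            - (1 + γ) * (Real.log (1 + γ) - c) *
              (2 * (1 + γ) / (2 * Real.sqrt ((1 + γ) ^ 2 - 1))) =
          (((1 + γ) ^ 2 - 1) - (Real.log (1 + γ) - c)) / Real.sqrt ((1 + γ) ^ 2 - 1) := by
        rw [eq_div_iff ht.ne']
        field_simp
        linear_combination (Real.log (1 + γ) - c + 1) * ht2
      rw [heq2]
      exact div_pos hkey ht
    positivity
  -- g is strictly monotone on Ioi 0
  have hgmono : StrictMonoOn g (Set.Ioi 0) := by
    apply strictMonoOn_of_deriv_pos (convex_Ioi 0)
    · exact fun γ hγ => ((hderiv γ hγ).continuousAt).continuousWithinAt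
    · intro γ hγ
      rw [interior_Ioi] at hγ
      rw [(hderiv γ hγ).deriv]
      exact hpos γ hγ
  -- the original function agrees with g on Ioi 0
  have heq : ∀ γ ∈ Set.Ioi (0 : ℝ),
      Real.sqrt (T * W / (1 - (1 + γ) ^ (-2 : ℤ))) *
        (Real.log (1 + γ) - c) = g γ := by
    intro γ hγ
    have hγ0 : (0 : ℝ) < γ := hγ
    have hx : (0 : ℝ) < 1 + γ := by linarith
    have hs : (0 : ℝ) < (1 + γ) ^ 2 - 1 := by nlinarith
    have hz : (1 + γ) ^ (-2 : ℤ) = 1 / (1 + γ) ^ 2 := by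
      rw [zpow_neg, one_div, zpow_ofNat]
    have harg : T * W / (1 - (1 + γ) ^ (-2 : ℤ)) =
        (T * W) * ((1 + γ) ^ 2 / ((1 + γ) ^ 2 - 1)) := by
      rw [hz]
      field_simp
    rw [harg, Real.sqrt_mul hTW.le, Real.sqrt_div (by positivity), Real.sqrt_sq hx.le]
    simp only [hgdef]
    ring
  -- transfer
  intro x hx y hy hxy
  simp only
  rw [heq x hx, heq y hy]
  exact hgmono hx hy hxy
end
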